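/- For a hyperbolic iterated function system consisting of finitely many contractions f₁,…,fₙ of a nonempty complete metric space X, the Hutchinson operator H(A) = f₁(A) ∪ ⋯ ∪ fₙ(A) is a contraction on the space of nonempty compact subsets of X with the Hausdorff metric, with Lipschitz constant the maximum of the contraction ratios of the fᵢ. -/

import Mathlib

open TopologicalSpace EMetric Set

lemma infEdist_image_le {X : Type*} [MetricSpace X] {K : NNReal} {g : X → X}
    (hg : LipschitzWith K g) (a : X) {t : Set X} (ht : t.Nonempty) :
    infEdist (g a) (g '' t) ≤ K * infEdist a t := by
  have : Nonempty t := ht.to_subtype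
  have h1 : (K : ENNReal) * infEdist a t = ⨅ y : t, (K : ENNReal) * edist a y := by
    rw [infEdist, Metric.infEDist, ← iInf_subtype'']
    exact ENNReal.mul_iInf' (by simp) (fun _ => this)
  rw [h1]
  refine le_iInf fun y => ?_
  calc infEdist (g a) (g '' t) ≤ edist (g a) (g y) :=
        infEdist_le_edist_of_mem (mem_image_of_mem _ y.2)
    _ ≤ K * edist a y := hg _ _

/-- The Hutchinson operator of a hyperbolic IFS `f₁,…,fₙ` (each `fᵢ` a contraction
with ratio `cᵢ < 1`) is Lipschitz on the space of nonempty compact subsets with the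
Hausdorff metric, with constant `max cᵢ`. -/
theorem stmt_12 {X : Type*} [MetricSpace X] [CompleteSpace X] [Nonempty X]
    (n : ℕ) (hn : 0 < n) (f : Fin n → X → X) (c : Fin n → NNReal)
    (hc : ∀ i, c i < 1) (hf : ∀ i, LipschitzWith (c i) (f i))
    (H : NonemptyCompacts X → NonemptyCompacts X)
    (hH : ∀ A : NonemptyCompacts X, (H A : Set X) = ⋃ i, f i '' (A : Set X)) :
    LipschitzWith (Finset.univ.sup c) H := by
  set K := Finset.univ.sup c with hK
  intro A B
  have hKc : ∀ i, (c i : ENNReal) ≤ K := fun i =>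
    ENNReal.coe_le_coe.2 (Finset.le_sup (Finset.mem_univ i))
  have key : ∀ (A B : NonemptyCompacts X),
      ∀ x ∈ (H A : Set X), infEdist x (H B : Set X) ≤ K * hausdorffEdist (A : Set X) B := by
    intro A B x hx
    rw [hH A] at hx
    obtain ⟨i, a, ha, rfl⟩ := by simpa using hx
    calc infEdist (f i a) (H B : Set X) ≤ infEdist (f i a) (f i '' (B : Set X)) := by
          rw [hH B]; exact infEdist_anti (subset_iUnion (fun j => f j '' (B : Set X)) i)
      _ ≤ c i * infEdist a B := infEdist_image_le (hf i) a B.nonempty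
      _ ≤ K * hausdorffEdist (A : Set X) B :=
          mul_le_mul' (hKc i) (infEdist_le_hausdorffEdist_of_mem ha)
  have : edist (H A) (H B) = hausdorffEdist (H A : Set X) (H B : Set X) := rfl
  rw [this]
  have hAB : edist A B = hausdorffEdist (A : Set X) (B : Set X) := rfl
  rw [hAB]
  refine hausdorffEdist_le_of_infEdist (key A B) fun x hx => ?_
  rw [show hausdorffEdist (A : Set X) (B : Set X) = hausdorffEdist (B : Set X) (A : Set X) from hausdorffEdist_comm]
  exact key B A x hx
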